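/- For every integer k ≥ 2, the finite trigonometric sum Σ_{j=1}^{k-1} 1/sin⁶(jπ/k) equals 2(k⁶ - 1)/945 + (k⁴ - 1)/45 + 8(k² - 1)/45. -/

import Mathlib

open Polynomial in
private lemma newton_inst (S : Finset ℕ) (b : ℕ → ℂ) (m : ℕ) (hm : 0 < m) :
    ∑ j ∈ S, b j ^ m = (-1)^(m+1) * m * (S.val.map b).esymm m -
      ∑ a ∈ (Finset.HasAntidiagonal.antidiagonal m).filter (fun a => a.1 ∈ Set.Ioo 0 m),
        (-1)^a.1 * (S.val.map b).esymm a.1 * ∑ j ∈ S, b j ^ a.2 := by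
  classical
  have h := MvPolynomial.psum_eq_mul_esymm_sub_sum (σ := {x // x ∈ S}) (R := ℂ) m hm
  have h2 := congrArg (MvPolynomial.aeval (fun i : {x // x ∈ S} => b i)) h
  have hms : Multiset.map (fun i : {x // x ∈ S} => b ↑i) S.attach.val = S.val.map b := by
    conv_rhs => rw [← Multiset.attach_map_val S.val, Multiset.map_map]
    rfl
  simp only [map_sub, map_mul, map_pow, map_sum, map_natCast, map_neg, map_one,
    MvPolynomial.aeval_esymm_eq_multiset_esymm, MvPolynomial.psum, MvPolynomial.aeval_X,
    Finset.univ_eq_attach] at h2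
  rw [hms] at h2
  simp only [fun (n:ℕ) => Finset.sum_attach S (fun j => b j ^ n)] at h2
  simpa using h2

/-- For every integer `k ≥ 2`,
`∑_{j=1}^{k-1} 1/sin⁶(jπ/k) = 2(k⁶ - 1)/945 + (k⁴ - 1)/45 + 8(k² - 1)/45`. -/
theorem sum_inv_sin_pow_six (k : ℕ) (hk : 2 ≤ k) :
    ∑ j ∈ Finset.Ico 1 k, 1 / Real.sin ((j : ℝ) * Real.pi / k) ^ 6
      = 2 * ((k : ℝ) ^ 6 - 1) / 945 + ((k : ℝ) ^ 4 - 1) / 45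
        + 8 * ((k : ℝ) ^ 2 - 1) / 45 := by
  classical
  open Polynomial in
  have hk0 : (k:ℕ) ≠ 0 := by omega
  have hkpos : 0 < k := by omega
  have hKne : (k:ℂ) ≠ 0 := Nat.cast_ne_zero.mpr hk0
  set ζ : ℂ := Complex.exp (2 * Real.pi * Complex.I / k) with hζdef
  have hζ : IsPrimitiveRoot ζ k := Complex.isPrimitiveRoot_exp k hk0
  set S : Finset ℕ := Finset.Ico 1 k with hSdef
  set b : ℕ → ℂ := fun j => (1 - ζ^j)⁻¹ with hbdef
  have hζj : ∀ j ∈ S, ζ^j ≠ 1 := by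
    intro j hj
    rw [hSdef, Finset.mem_Ico] at hj
    exact hζ.pow_ne_one_of_pos_of_lt (by omega) hj.2
  have hne : ∀ j ∈ S, (1 : ℂ) - ζ^j ≠ 0 := fun j hj => sub_ne_zero.mpr (Ne.symm (hζj j hj))
  have hcard : S.card = k - 1 := by rw [hSdef, Nat.card_Ico]
  -- the polynomial with the nontrivial roots of unity as roots
  have prodS : ∏ j ∈ S, (X - C (ζ^j)) = ∑ i ∈ Finset.range k, (X:ℂ[X])^i := by
    have h := X_pow_sub_C_eq_prod hζ hkpos (one_pow k)
    simp only [mul_one] at h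
    rw [Finset.prod_range_eq_mul_Ico _ hkpos, pow_zero] at h
    have h8 := geom_sum_mul (Polynomial.X : ℂ[X]) k
    apply mul_left_cancel₀ (X_sub_C_ne_zero (1:ℂ))
    rw [← h, C_1, ← h8]
    ring
  -- pointwise version
  have evalProdS : ∀ w : ℂ, ∏ j ∈ S, (w - ζ^j) = ∑ i ∈ Finset.range k, w^i := by
    intro w
    have := congrArg (eval w) prodS
    simpa [eval_prod] using this
  -- ∏ (1 - ζ^j) = k
  have prod_one_sub : ∏ j ∈ S, (1 - ζ^j) = (k:ℂ) := by
    have := evalProdS 1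
    simpa using this

  -- A = B
  set A : ℂ[X] := ∏ j ∈ S, ((X - 1) - C (ζ^j) * X) with hAdef
  set B : ℂ[X] := ∑ i ∈ Finset.range k, (X - 1)^i * X^(k-1-i) with hBdef
  have hAB : A = B := by
    apply eq_of_infinite_eval_eq
    apply Set.Infinite.mono _ ((Set.finite_singleton (0:ℂ)).infinite_compl)
    intro y hy
    have hy0 : y ≠ 0 := hy
    simp only [Set.mem_setOf_eq]
    have evalA : eval y A = ∏ j ∈ S, (y - 1 - ζ^j * y) := by
      simp [hAdef, eval_prod]
    have evalB : eval y B = ∑ i ∈ Finset.range k, (y-1)^i * y^(k-1-i) := by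
      simp [hBdef, eval_finset_sum]
    rw [evalA, evalB]
    calc ∏ j ∈ S, (y - 1 - ζ^j * y) = ∏ j ∈ S, (y * ((y-1)/y - ζ^j)) := by
          refine Finset.prod_congr rfl (fun j _ => ?_)
          field_simp
    _ = y^(k-1) * ∏ j ∈ S, ((y-1)/y - ζ^j) := by
          rw [Finset.prod_mul_distrib, Finset.prod_const, hcard]
    _ = y^(k-1) * ∑ i ∈ Finset.range k, ((y-1)/y)^i := by rw [evalProdS]
    _ = ∑ i ∈ Finset.range k, (y-1)^i * y^(k-1-i) := by
          rw [Finset.mul_sum]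
          refine Finset.sum_congr rfl (fun i hi => ?_)
          rw [Finset.mem_range] at hi
          have hsplit : y ^ (k-1) = y ^ (k-1-i) * y ^ i := by
            rw [← pow_add]
            congr 1
            omega
          rw [div_pow, hsplit]
          field_simp
  -- C k * P = B
  set P : ℂ[X] := ∏ j ∈ S, (X - C (b j)) with hPdef
  have hCP : C (k:ℂ) * P = B := by
    rw [← hAB, hAdef, hPdef, ← prod_one_sub, map_prod, ← Finset.prod_mul_distrib]
    refine Finset.prod_congr rfl (fun j hj => ?_)
    have h1 : (1 - ζ^j) * b j = 1 := mul_inv_cancel₀ (hne j hj)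
    calc C (1 - ζ^j) * (X - C (b j)) = C (1 - ζ^j) * X - C ((1-ζ^j) * b j) := by
          rw [map_mul]; ring
    _ = (X - 1) - C (ζ^j) * X := by
          rw [h1, map_sub, map_one]
          ring
  -- elementary symmetric values
  have hmcard : Multiset.card (S.val.map b) = k - 1 := by
    rw [Multiset.card_map]
    exact hcard
  have hEval : ∀ r : ℕ, (Multiset.map b S.val).esymm r = (k.choose (r+1) : ℂ) / k := by
    intro r
    by_cases hr : r ≤ k - 1
    · have hcoeff : P.coeff (k-1-r) = (-1)^r * (Multiset.map b S.val).esymm r := by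
        have hml := Multiset.prod_X_sub_C_coeff (S.val.map b)
          (show k-1-r ≤ Multiset.card (S.val.map b) by rw [hmcard]; omega)
        rw [hmcard] at hml
        have hrr : k - 1 - (k - 1 - r) = r := by omega
        rw [hrr] at hml
        rw [← hml, hPdef]
        rw [Multiset.map_map]
        rfl
      have hBcoeff : B.coeff (k-1-r) = (-1)^r * (k.choose (r+1) : ℂ) := by
        rw [hBdef, finset_sum_coeff]
        have hterm : ∀ i ∈ Finset.range k, ((X - 1:ℂ[X])^i * X^(k-1-i)).coeff (k-1-r)
            = if r ≤ i then (-1)^r * (i.choose r : ℂ) else 0 := by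
          intro i hi
          rw [Finset.mem_range] at hi
          rw [coeff_mul_X_pow']
          by_cases hri : r ≤ i
          · rw [if_pos (show k-1-i ≤ k-1-r by omega), if_pos hri]
            have h1 : k - 1 - r - (k - 1 - i) = i - r := by omega
            rw [h1]
            have h2 : ((X:ℂ[X]) - 1)^i = (X + C (-1))^i := by
              rw [map_neg, map_one, ← sub_eq_add_neg]
            rw [h2, coeff_X_add_C_pow]
            have h3 : i - (i - r) = r := by omega
            rw [h3, Nat.choose_symm hri]
          · rw [if_neg (show ¬(k-1-i ≤ k-1-r) by omega), if_neg hri]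
        rw [Finset.sum_congr rfl hterm, Finset.sum_ite, Finset.sum_const_zero, add_zero]
        have hfil : Finset.filter (fun i => r ≤ i) (Finset.range k) = Finset.Icc r (k-1) := by
          ext i
          simp only [Finset.mem_filter, Finset.mem_range, Finset.mem_Icc]
          omega
        rw [hfil, ← Finset.mul_sum, ← Nat.cast_sum]
        congr 2
        have := Nat.sum_Icc_choose (k-1) r
        rw [show k - 1 + 1 = k by omega] at this
        exact this
      have hcc := congrArg (fun q => Polynomial.coeff q (k-1-r)) hCP
      simp only [coeff_C_mul] at hcc
      rw [hcoeff, hBcoeff] at hcc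
      have hpm : ((-1:ℂ)^r) ≠ 0 := pow_ne_zero _ (by norm_num)
      rw [eq_div_iff hKne]
      apply mul_left_cancel₀ hpm
      linear_combination hcc
    · have h1 : (Multiset.map b S.val).esymm r = 0 := by
        rw [Multiset.esymm, Multiset.powersetCard_eq_empty r (by rw [hmcard]; omega)]
        simp
      have h2 : k.choose (r+1) = 0 := Nat.choose_eq_zero_of_lt (by omega)
      rw [h1, h2]
      simp
  have hch : ∀ m:ℕ, ((k.choose m : ℕ) : ℂ) * (Nat.factorial m : ℂ) = (descPochhammer ℂ m).eval (k:ℂ) := by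
    intro m
    rw [descPochhammer_eval_eq_descFactorial, Nat.descFactorial_eq_factorial_mul_choose]
    push_cast
    ring

  have hE1 : (Multiset.map b S.val).esymm 1 = (((k:ℂ) - 1)) / 2 := by
    have h0 := hEval 1
    norm_num at h0
    rw [h0, div_eq_div_iff hKne (by norm_num : ((2:ℂ)) ≠ 0)]
    have h := hch 2
    simp only [descPochhammer_succ_eval, descPochhammer_zero, eval_one] at h
    norm_num [Nat.factorial] at h
    linear_combination h

  have hE2 : (Multiset.map b S.val).esymm 2 = (((k:ℂ) - 1) * ((k:ℂ) - 2)) / 6 := by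
    have h0 := hEval 2
    norm_num at h0
    rw [h0, div_eq_div_iff hKne (by norm_num : (6:ℂ) ≠ 0)]
    have h := hch 3
    simp only [descPochhammer_succ_eval, descPochhammer_zero, eval_one] at h
    norm_num [Nat.factorial] at h
    linear_combination h

  have hE3 : (Multiset.map b S.val).esymm 3 = (((k:ℂ) - 1) * ((k:ℂ) - 2) * ((k:ℂ) - 3)) / 24 := by
    have h0 := hEval 3
    norm_num at h0
    rw [h0, div_eq_div_iff hKne (by norm_num : (24:ℂ) ≠ 0)]
    have h := hch 4
    simp only [descPochhammer_succ_eval, descPochhammer_zero, eval_one] at h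
    norm_num [Nat.factorial] at h
    linear_combination h

  have hE4 : (Multiset.map b S.val).esymm 4 = (((k:ℂ) - 1) * ((k:ℂ) - 2) * ((k:ℂ) - 3) * ((k:ℂ) - 4)) / 120 := by
    have h0 := hEval 4
    norm_num at h0
    rw [h0, div_eq_div_iff hKne (by norm_num : (120:ℂ) ≠ 0)]
    have h := hch 5
    simp only [descPochhammer_succ_eval, descPochhammer_zero, eval_one] at h
    norm_num [Nat.factorial] at h
    linear_combination h

  have hE5 : (Multiset.map b S.val).esymm 5 = (((k:ℂ) - 1) * ((k:ℂ) - 2) * ((k:ℂ) - 3) * ((k:ℂ) - 4) * ((k:ℂ) - 5)) / 720 := by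
    have h0 := hEval 5
    norm_num at h0
    rw [h0, div_eq_div_iff hKne (by norm_num : (720:ℂ) ≠ 0)]
    have h := hch 6
    simp only [descPochhammer_succ_eval, descPochhammer_zero, eval_one] at h
    norm_num [Nat.factorial] at h
    linear_combination h

  have hE6 : (Multiset.map b S.val).esymm 6 = (((k:ℂ) - 1) * ((k:ℂ) - 2) * ((k:ℂ) - 3) * ((k:ℂ) - 4) * ((k:ℂ) - 5) * ((k:ℂ) - 6)) / 5040 := by
    have h0 := hEval 6
    norm_num at h0
    rw [h0, div_eq_div_iff hKne (by norm_num : (5040:ℂ) ≠ 0)]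
    have h := hch 7
    simp only [descPochhammer_succ_eval, descPochhammer_zero, eval_one] at h
    norm_num [Nat.factorial] at h
    linear_combination h

  have hp1 : ∑ j ∈ S, b j = ((k:ℂ) - 1) / 2 := by
    have h := newton_inst S b 1 (by norm_num)
    norm_num [Finset.Nat.sum_antidiagonal_eq_sum_range_succ_mk, Finset.sum_filter,
      Finset.sum_range_succ, Set.mem_Ioo] at h
    rw [hE1] at h
    linear_combination h

  have hp2 : ∑ j ∈ S, b j ^ 2 = (-(k:ℂ)^2 + 6*(k:ℂ) - 5) / 12 := by
    have h := newton_inst S b 2 (by norm_num)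
    norm_num [Finset.Nat.sum_antidiagonal_eq_sum_range_succ_mk, Finset.sum_filter,
      Finset.sum_range_succ, Set.mem_Ioo] at h
    rw [hE1, hE2, hp1] at h
    linear_combination h

  have hp3 : ∑ j ∈ S, b j ^ 3 = (-(k:ℂ)^2 + 4*(k:ℂ) - 3) / 8 := by
    have h := newton_inst S b 3 (by norm_num)
    norm_num [Finset.Nat.sum_antidiagonal_eq_sum_range_succ_mk, Finset.sum_filter,
      Finset.sum_range_succ, Set.mem_Ioo] at h
    rw [hE1, hE2, hE3, hp1, hp2] at h
    linear_combination h

  have hp4 : ∑ j ∈ S, b j ^ 4 = ((k:ℂ)^4 - 110*(k:ℂ)^2 + 360*(k:ℂ) - 251) / 720 := by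
    have h := newton_inst S b 4 (by norm_num)
    norm_num [Finset.Nat.sum_antidiagonal_eq_sum_range_succ_mk, Finset.sum_filter,
      Finset.sum_range_succ, Set.mem_Ioo] at h
    rw [hE1, hE2, hE3, hE4, hp1, hp2, hp3] at h
    linear_combination h

  have hp5 : ∑ j ∈ S, b j ^ 5 = ((k:ℂ)^4 - 50*(k:ℂ)^2 + 144*(k:ℂ) - 95) / 288 := by
    have h := newton_inst S b 5 (by norm_num)
    norm_num [Finset.Nat.sum_antidiagonal_eq_sum_range_succ_mk, Finset.sum_filter,
      Finset.sum_range_succ, Set.mem_Ioo] at h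
    rw [hE1, hE2, hE3, hE4, hE5, hp1, hp2, hp3, hp4] at h
    linear_combination h

  have hp6 : ∑ j ∈ S, b j ^ 6 = (-2*(k:ℂ)^6 + 357*(k:ℂ)^4 - 11508*(k:ℂ)^2 + 30240*(k:ℂ) - 19087) / 60480 := by
    have h := newton_inst S b 6 (by norm_num)
    norm_num [Finset.Nat.sum_antidiagonal_eq_sum_range_succ_mk, Finset.sum_filter,
      Finset.sum_range_succ, Set.mem_Ioo] at h
    rw [hE1, hE2, hE3, hE4, hE5, hE6, hp1, hp2, hp3, hp4, hp5] at h
    linear_combination h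

  -- trigonometric link
  have hsin : ∀ j ∈ S, ((1 / Real.sin ((j:ℝ) * Real.pi / k) ^ 6 : ℝ) : ℂ)
      = -64 * ((b j)^6 - 3*(b j)^5 + 3*(b j)^4 - (b j)^3) := by
    intro j hj
    have hjS : 1 ≤ j ∧ j < k := by rw [hSdef, Finset.mem_Ico] at hj; exact hj
    have hkR : (0:ℝ) < k := by positivity
    set θ : ℝ := (j:ℝ) * Real.pi / k with hθ
    have hsp : 0 < Real.sin θ := by
      apply Real.sin_pos_of_pos_of_lt_pi
      · rw [hθ]
        have : (0:ℝ) < (j:ℝ) := by exact_mod_cast hjS.1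
        positivity
      · rw [hθ, div_lt_iff₀ hkR]
        have hjk : (j:ℝ) < k := by exact_mod_cast hjS.2
        nlinarith [Real.pi_pos]
    set s : ℝ := Real.sin θ with hs
    have hs0 : (s:ℂ) ≠ 0 := by
      simpa using ne_of_gt hsp
    set u : ℂ := Complex.exp (θ * Complex.I) with hu
    have hu0 : u ≠ 0 := Complex.exp_ne_zero _
    have hsC : (s:ℂ) = (u⁻¹ - u) * Complex.I / 2 := by
      rw [hs, Complex.ofReal_sin, Complex.sin, hu, ← Complex.exp_neg, neg_mul]
    have hsC2 : (s:ℂ)^2 = -((u⁻¹ - u))^2/4 := by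
      rw [hsC, div_pow, mul_pow, Complex.I_sq]
      ring
    have hu2 : ζ^j = u^2 := by
      rw [hζdef, ← Complex.exp_nat_mul, hu, ← Complex.exp_nat_mul]
      congr 1
      rw [hθ]
      push_cast
      ring
    have hkey : (1 - ζ^j)^2 = -4*(s:ℂ)^2*ζ^j := by
      rw [hu2, hsC2]
      field_simp
    have hzne : ζ^j ≠ 0 := by
      rw [hu2]
      exact pow_ne_zero _ hu0
    have h1ζ : (1:ℂ) - ζ^j ≠ 0 := hne j hj
    have e1 : b j * (b j - 1) * (1 - ζ^j)^2 = ζ^j := by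
      simp only [hbdef]
      have hinv : (1 - ζ^j)⁻¹ * (1 - ζ^j) = 1 := inv_mul_cancel₀ h1ζ
      linear_combination ((1-ζ^j)⁻¹ * (1-ζ^j) + 1 - (1-ζ^j)) * hinv
    rw [hkey] at e1
    have e2 : (b j * (b j - 1) * (-4 * (s:ℂ)^2)) * ζ^j = 1 * ζ^j := by
      linear_combination e1
    have e3 := mul_right_cancel₀ hzne e2
    have hbbe : b j * (b j - 1) = -(1/(4*(s:ℂ)^2)) := by
      field_simp
      linear_combination -e3
    calc ((1 / s ^ 6 : ℝ) : ℂ) = 1/(s:ℂ)^6 := by push_cast; ring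
    _ = -64 * (b j * (b j - 1))^3 := by
        rw [hbbe]
        field_simp
        ring
    _ = -64 * ((b j)^6 - 3*(b j)^5 + 3*(b j)^4 - (b j)^3) := by ring
  -- assemble
  have hsplit : ∑ j ∈ S, ((b j)^6 - 3*(b j)^5 + 3*(b j)^4 - (b j)^3)
      = (∑ j ∈ S, b j ^ 6) - 3*(∑ j ∈ S, b j ^ 5) + 3*(∑ j ∈ S, b j ^ 4) - (∑ j ∈ S, b j ^ 3) := by
    rw [Finset.sum_sub_distrib, Finset.sum_add_distrib, Finset.sum_sub_distrib,
      ← Finset.mul_sum, ← Finset.mul_sum]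
  have main : ((∑ j ∈ S, 1 / Real.sin ((j : ℝ) * Real.pi / k) ^ 6 : ℝ) : ℂ)
      = ((2 * ((k:ℝ)^6 - 1)/945 + ((k:ℝ)^4 - 1)/45 + 8*((k:ℝ)^2 - 1)/45 : ℝ) : ℂ) := by
    rw [Complex.ofReal_sum]
    rw [Finset.sum_congr rfl hsin, ← Finset.mul_sum, hsplit, hp3, hp4, hp5, hp6]
    push_cast
    field_simp
    ring
  exact Complex.ofReal_injective main
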